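/- In the ring R = k[x₁, x₂, …, y]/(x_i x_j, y^i x_i : i, j ≥ 1), every R-submodule N of the y-power torsion submodule t(R) satisfying y·N = N is zero; equivalently, t(R) has no nonzero submodule divisible with respect to the filter of ideals of R containing a power of (y). -/

import Mathlib

open MvPolynomial

set_option maxHeartbeats 1000000
set_option synthInstance.maxHeartbeats 400000

noncomputable section

/-- The polynomial ring `k[x₁, x₂, …, y]`, with `y` the variable `none` and `xₙ` (`n ≥ 1`)
the variable `some n`. -/
abbrev PolyR (k : Type) [Field k] : Type := MvPolynomial (Option ℕ+) k

/-- The variable `y`. -/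
def yP (k : Type) [Field k] : PolyR k := X none

/-- The variable `xₙ`, for `n ≥ 1`. -/
def xP (k : Type) [Field k] (n : ℕ+) : PolyR k := X (some n)

/-- The set of relations `xᵢxⱼ` (`i, j ≥ 1`) and `yⁱxᵢ` (`i ≥ 1`). -/
def relSet (k : Type) [Field k] : Set (PolyR k) :=
  {p | (∃ i j : ℕ+, p = xP k i * xP k j) ∨ (∃ i : ℕ+, p = yP k ^ (i : ℕ) * xP k i)}

/-- The ring `R = k[x₁, x₂, …, y]/(xᵢxⱼ, yⁱxᵢ : i, j ≥ 1)`. -/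
abbrev Rg (k : Type) [Field k] : Type := PolyR k ⧸ Ideal.span (relSet k)

/-- The image of `y` in `R`. -/
def yR (k : Type) [Field k] : Rg k := Ideal.Quotient.mk _ (yP k)

/-- The image of `xₙ` in `R`. -/
def xR (k : Type) [Field k] (n : ℕ+) : Rg k := Ideal.Quotient.mk _ (xP k n)

/-- The `y`-power torsion submodule `t(R) = {r ∈ R : yᵏ r = 0 for some k ≥ 0}`. -/
def tR (k : Type) [Field k] : Submodule (Rg k) (Rg k) :=
  Submodule.torsion' (Rg k) (Rg k) (Submonoid.powers (yR k))

end

/-- A "good" exponent: not divisible by the exponent of any relation monomial. -/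
def GoodExp (d : (Option ℕ+) →₀ ℕ) : Prop :=
  ∀ i j : ℕ+,
    ¬(Finsupp.single (some i : Option ℕ+) 1 + Finsupp.single (some j : Option ℕ+) 1 ≤ d) ∧
    ¬(Finsupp.single (none : Option ℕ+) (i : ℕ) + Finsupp.single (some i : Option ℕ+) 1 ≤ d)

lemma xPxP_eq (k : Type) [Field k] (i j : ℕ+) :
    xP k i * xP k j
      = monomial (Finsupp.single (some i : Option ℕ+) 1 + Finsupp.single (some j : Option ℕ+) 1)
          (1 : k) := by
  rw [xP, xP, X, X, monomial_mul, one_mul]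

lemma yPxP_eq (k : Type) [Field k] (i : ℕ+) :
    yP k ^ (i : ℕ) * xP k i
      = monomial (Finsupp.single (none : Option ℕ+) (i : ℕ)
            + Finsupp.single (some i : Option ℕ+) 1) (1 : k) := by
  rw [yP, xP, X_pow_eq_monomial, X, monomial_mul, one_mul]

/-- Good coefficients vanish on the ideal of relations. -/
lemma coeff_vanish (k : Type) [Field k] {d : (Option ℕ+) →₀ ℕ} (hd : GoodExp d)
    {p : PolyR k} (hp : p ∈ Ideal.span (relSet k)) (q : PolyR k) :
    coeff d (q * p) = 0 := by
  induction hp using Submodule.span_induction generalizing q with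
  | mem r hr =>
    rcases hr with ⟨i, j, rfl⟩ | ⟨i, rfl⟩
    · rw [xPxP_eq, coeff_mul_monomial', if_neg (hd i j).1]
    · rw [yPxP_eq, coeff_mul_monomial', if_neg (hd i i).2]
  | zero => simp
  | add a b _ _ ha hb => rw [mul_add, coeff_add, ha q, hb q, add_zero]
  | smul r a _ ha => rw [smul_eq_mul, ← mul_assoc, ha (q * r)]

/-- Any monomial with a bad exponent lies in the ideal of relations. -/
lemma bad_mem (k : Type) [Field k] {d : (Option ℕ+) →₀ ℕ} (hd : ¬ GoodExp d) (c : k) :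
    (monomial d c : PolyR k) ∈ Ideal.span (relSet k) := by
  have hmem : ∀ (e : (Option ℕ+) →₀ ℕ) (r : PolyR k), r ∈ relSet k →
      r = monomial e (1 : k) → e ≤ d → (monomial d c : PolyR k) ∈ Ideal.span (relSet k) := by
    intro e r hr hre hle
    have : (monomial d c : PolyR k) = monomial (d - e) c * r := by
      rw [hre, monomial_mul, mul_one, tsub_add_cancel_of_le hle]
    rw [this]
    exact Ideal.mul_mem_left _ _ (Ideal.subset_span hr)
  simp only [GoodExp, not_forall] at hd
  obtain ⟨i, j, hij⟩ := hd
  rw [not_and_or, not_not, not_not] at hij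
  rcases hij with h | h
  · exact hmem _ _ (Or.inl ⟨i, j, rfl⟩) (xPxP_eq k i j) h
  · exact hmem _ _ (Or.inr ⟨i, rfl⟩) (yPxP_eq k i) h


/-- In `R = k[x₁, x₂, …, y]/(xᵢxⱼ, yⁱxᵢ)`, every submodule `N ⊆ t(R)` with
`y·N = N` is zero; i.e. `t(R)` has no nonzero divisible submodule with respect to the filter
of ideals containing a power of `(y)`. -/
theorem stmt_12 (k : Type) [Field k] (N : Submodule (Rg k) (Rg k))
    (hN : N ≤ tR k) (hdiv : Ideal.span {yR k} • N = N) : N = ⊥ := by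
  have hpow : ∀ c : ℕ, N ≤ Ideal.span {yR k ^ c} := by
    intro c
    induction c with
    | zero => simp [Ideal.span_singleton_one]
    | succ c ih =>
      calc N = Ideal.span {yR k} • N := hdiv.symm
        _ ≤ Ideal.span {yR k} • (Ideal.span {yR k ^ c} : Ideal (Rg k)) :=
            Submodule.smul_mono le_rfl ih
        _ = Ideal.span {yR k ^ (c + 1)} := by
            rw [smul_eq_mul, Ideal.span_singleton_mul_span_singleton, ← pow_succ']
  rw [eq_bot_iff]
  intro n hn
  obtain ⟨p, rfl⟩ := Ideal.Quotient.mk_surjective n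
  rw [Submodule.mem_bot, Ideal.Quotient.eq_zero_iff_mem]
  -- good coefficients of p vanish
  have hgood : ∀ d : (Option ℕ+) →₀ ℕ, GoodExp d → coeff d p = 0 := by
    intro d hd
    set c := d none + 1 with hc
    obtain ⟨s, hs⟩ := Ideal.mem_span_singleton'.mp (hpow c hn)
    obtain ⟨q, rfl⟩ := Ideal.Quotient.mk_surjective s
    rw [yR, ← map_pow, ← map_mul] at hs
    have hsub : q * yP k ^ c - p ∈ Ideal.span (relSet k) :=
      (Ideal.Quotient.mk_eq_mk_iff_sub_mem _ _).mp hs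
    have h1 : coeff d (q * yP k ^ c - p) = 0 := by
      have := coeff_vanish k hd hsub 1
      rwa [one_mul] at this
    have h2 : coeff d (q * yP k ^ c) = 0 := by
      rw [yP, X_pow_eq_monomial, coeff_mul_monomial', if_neg]
      rw [Finsupp.single_le_iff]
      omega
    have h3 : coeff d (q * yP k ^ c) - coeff d p = 0 := by
      rw [← MvPolynomial.coeff_sub, h1]
    rw [h2] at h3
    simpa using h3
  -- p is a sum of monomials, each in the ideal
  rw [as_sum p]
  apply Ideal.sum_mem
  intro d _
  by_cases hd : GoodExp d
  · rw [hgood d hd]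
    simp
  · exact bad_mem k hd _
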